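/- Two unrooted binary phylogenetic trees T1 and T2 on the same set of taxa X are topologically identical (isomorphic via a label-preserving isomorphism) if and only if they induce identical sets of quartets, i.e., for every 4-element subset {a,b,c,d} ⊆ X, T1 restricted to {a,b,c,d} equals T2 restricted to {a,b,c,d}. -/

import Mathlib

open SimpleGraph

/-- The degree of a vertex `v` in a graph `G`. -/
noncomputable def vdeg {V : Type} (G : SimpleGraph V) (v : V) : ℕ :=
  (G.neighborSet v).ncard

/-- The set of vertices lying on some path from `a` to `b` in `G`
(in a tree: the unique path). -/
def PathSet {V : Type} (G : SimpleGraph V) (a b : V) : Set V :=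
  {v | ∃ p : G.Walk a b, p.IsPath ∧ v ∈ p.support}

/-- An unrooted binary phylogenetic tree on the taxon set `X`: a tree whose
leaves are bijectively labeled by `X` and whose internal vertices have degree 3. -/
structure UBTree (X : Type) where
  n : ℕ
  G : SimpleGraph (Fin n)
  isTree : G.IsTree
  lab : X → Fin n
  lab_inj : Function.Injective lab
  leaf_iff : ∀ v : Fin n, v ∈ Set.range lab ↔ vdeg G v ≤ 1
  internal_deg : ∀ v : Fin n, v ∉ Set.range lab → vdeg G v = 3

def allDiff3 {α : Type} (a b c : α) : Prop := a ≠ b ∧ a ≠ c ∧ b ≠ c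

def allDiff4 {α : Type} (a b c d : α) : Prop :=
  a ≠ b ∧ a ≠ c ∧ a ≠ d ∧ b ≠ c ∧ b ≠ d ∧ c ≠ d

/-- `T` displays the quartet `ab|cd` iff the path between the leaves labeled `a,b`
is vertex-disjoint from the path between the leaves labeled `c,d`. -/
def UBTree.Quartet {X : Type} (T : UBTree X) (a b c d : X) : Prop :=
  Disjoint (PathSet T.G (T.lab a) (T.lab b)) (PathSet T.G (T.lab c) (T.lab d))

/-- The minimal connecting subtree of the taxa in `B`: all vertices lying on a path
between two leaves labeled by elements of `B`. -/
def UBTree.span {X : Type} (T : UBTree X) (B : Set X) : Set (Fin T.n) :=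
  ⋃ a ∈ B, ⋃ b ∈ B, PathSet T.G (T.lab a) (T.lab b)

/-- A label-preserving isomorphism between two trees on the same taxon set. -/
def UBTree.Iso {X : Type} (T1 T2 : UBTree X) : Prop :=
  ∃ φ : T1.G ≃g T2.G, ∀ x : X, φ (T1.lab x) = T2.lab x


namespace Bnm
set_option linter.unusedSectionVars false

variable {V : Type} [Fintype V] [DecidableEq V] {G : SimpleGraph V}

/-- Betweenness in terms of graph distance. -/
def Btw (G : SimpleGraph V) (a b c : V) : Prop :=
  G.dist a b + G.dist b c = G.dist a c

theorem path_unique (hT : G.IsTree) {u v : V} {p q : G.Walk u v}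
    (hp : p.IsPath) (hq : q.IsPath) : p = q :=
  ((hT.existsUnique_path u v).unique hp hq)

theorem dist0 (hT : G.IsTree) {u v : V} : G.dist u v = 0 ↔ u = v :=
  hT.isConnected.dist_eq_zero_iff

theorem tri (hT : G.IsTree) (u v w : V) : G.dist u w ≤ G.dist u v + G.dist v w :=
  hT.isConnected.dist_triangle

theorem path_length_eq_dist (hT : G.IsTree) {u v : V} (p : G.Walk u v) (hp : p.IsPath) :
    p.length = G.dist u v := by
  refine le_antisymm ?_ (SimpleGraph.dist_le p)
  rcases eq_or_ne u v with rfl | hne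
  · have : p = Walk.nil := path_unique hT hp Walk.IsPath.nil
    simp [this]
  · have h0 : G.dist u v ≠ 0 := fun h => hne ((dist0 hT).mp h)
    obtain ⟨w, hw⟩ := SimpleGraph.exists_walk_of_dist_ne_zero h0
    have : p = w.bypass := path_unique hT hp w.bypass_isPath
    rw [this, ← hw]
    exact Walk.length_bypass_le w

theorem mem_pathSet_iff_support (hT : G.IsTree) {u v x : V} {p : G.Walk u v}
    (hp : p.IsPath) : x ∈ PathSet G u v ↔ x ∈ p.support := by
  constructor
  · rintro ⟨q, hq, hx⟩; rwa [path_unique hT hq hp] at hx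
  · intro hx; exact ⟨p, hp, hx⟩

/-- The canonical path between two vertices of a tree. -/
noncomputable def tpath (hT : G.IsTree) (u v : V) : G.Walk u v :=
  (hT.existsUnique_path u v).exists.choose

theorem tpath_isPath (hT : G.IsTree) (u v : V) : (tpath hT u v).IsPath :=
  (hT.existsUnique_path u v).exists.choose_spec

theorem left_mem_pathSet (hT : G.IsTree) (u v : V) : u ∈ PathSet G u v :=
  ⟨tpath hT u v, tpath_isPath hT u v, Walk.start_mem_support _⟩

theorem right_mem_pathSet (hT : G.IsTree) (u v : V) : v ∈ PathSet G u v :=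
  ⟨tpath hT u v, tpath_isPath hT u v, Walk.end_mem_support _⟩

theorem mem_pathSet_symm {u v x : V} (h : x ∈ PathSet G u v) : x ∈ PathSet G v u := by
  obtain ⟨p, hp, hx⟩ := h
  exact ⟨p.reverse, hp.reverse, by simp [Walk.support_reverse, hx]⟩

theorem pathSet_comm (hT : G.IsTree) (u v : V) : PathSet G u v = PathSet G v u :=
  Set.ext fun _ => ⟨mem_pathSet_symm, mem_pathSet_symm⟩

theorem btw_of_mem (hT : G.IsTree) {a b x : V} (h : x ∈ PathSet G a b) :
    Btw G a x b := by
  have hp := tpath_isPath hT a b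
  rw [mem_pathSet_iff_support hT hp] at h
  have h1 : ((tpath hT a b).takeUntil x h).IsPath := hp.takeUntil h
  have h2 : ((tpath hT a b).dropUntil x h).IsPath := hp.dropUntil h
  have hl := Walk.take_spec (tpath hT a b) h
  have : ((tpath hT a b).takeUntil x h).length + ((tpath hT a b).dropUntil x h).length
      = (tpath hT a b).length := by
    conv_rhs => rw [← hl]
    rw [Walk.length_append]
  rw [path_length_eq_dist hT _ h1, path_length_eq_dist hT _ h2,
    path_length_eq_dist hT _ hp] at this
  exact this

theorem pathSet_split (hT : G.IsTree) {a b x : V} (h : x ∈ PathSet G a b) :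
    PathSet G a b = PathSet G a x ∪ PathSet G x b := by
  have hp := tpath_isPath hT a b
  have hx := (mem_pathSet_iff_support hT hp).mp h
  ext t
  rw [mem_pathSet_iff_support hT hp, Set.mem_union,
    mem_pathSet_iff_support hT (hp.takeUntil hx),
    mem_pathSet_iff_support hT (hp.dropUntil hx)]
  conv_lhs => rw [← Walk.take_spec (tpath hT a b) hx]
  rw [Walk.mem_support_append_iff]

theorem pathSet_glue (hT : G.IsTree) {a b c : V}
    (h : ∀ t, t ∈ PathSet G a b → t ∈ PathSet G b c → t = b) :
    PathSet G a c = PathSet G a b ∪ PathSet G b c := by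
  have hp := tpath_isPath hT a b
  have hq := tpath_isPath hT b c
  have hpath : ((tpath hT a b).append (tpath hT b c)).IsPath := by
    rw [Walk.isPath_def, Walk.support_append]
    refine List.Nodup.append hp.support_nodup (hq.support_nodup.tail) ?_
    intro t ht1 ht2
    have ht2' : t ∈ (tpath hT b c).support := List.mem_of_mem_tail ht2
    have : t = b := h t ((mem_pathSet_iff_support hT hp).mpr ht1)
      ((mem_pathSet_iff_support hT hq).mpr ht2')
    subst this
    have : (tpath hT t c).support = t :: (tpath hT t c).support.tail :=
      (Walk.support_eq_cons _)
    have hnd := hq.support_nodup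
    rw [this] at hnd
    exact (List.nodup_cons.mp hnd).1 ht2
  ext t
  rw [mem_pathSet_iff_support hT hpath, Walk.mem_support_append_iff, Set.mem_union,
    mem_pathSet_iff_support hT hp, mem_pathSet_iff_support hT hq]

theorem exists_med (hT : G.IsTree) (u v w : V) :
    ∃ m, m ∈ PathSet G u v ∧ m ∈ PathSet G v w ∧ m ∈ PathSet G u w := by
  classical
  -- argmin of dist to v over the path from u to w
  have hne : ((tpath hT u w).support.toFinset : Finset V).Nonempty :=
    ⟨u, by simp [Walk.start_mem_support]⟩
  obtain ⟨m, hm, hmin⟩ := Finset.exists_min_image _ (fun x => G.dist v x) hne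
  rw [List.mem_toFinset] at hm
  have hmP : m ∈ PathSet G u w := (mem_pathSet_iff_support hT (tpath_isPath hT u w)).mpr hm
  have key : ∀ s, s ∈ PathSet G m u ∨ s ∈ PathSet G m w → s ∈ PathSet G v m → s = m := by
    intro s hs hvm
    have hsP : s ∈ PathSet G u w := by
      rcases hs with hs | hs
      · rw [pathSet_split hT hmP]; left; rw [pathSet_comm hT]; exact hs
      · rw [pathSet_split hT hmP]; right; exact hs
    have hsS : s ∈ (tpath hT u w).support.toFinset := by
      rw [List.mem_toFinset]
      exact (mem_pathSet_iff_support hT (tpath_isPath hT u w)).mp hsP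
    have h1 : G.dist v m ≤ G.dist v s := hmin s hsS
    have h2 : Btw G v s m := btw_of_mem hT hvm
    unfold Btw at h2
    have : G.dist s m = 0 := by omega
    exact (dist0 hT).mp this
  have hmu : m ∈ PathSet G v u := by
    rw [pathSet_glue hT (fun t ht1 ht2 => key t (Or.inl ht2) ht1)]
    right; exact left_mem_pathSet hT m u
  have hmw : m ∈ PathSet G v w := by
    rw [pathSet_glue hT (fun t ht1 ht2 => key t (Or.inr ht2) ht1)]
    right; exact left_mem_pathSet hT m w
  exact ⟨m, by rw [pathSet_comm hT]; exact hmu, hmw, hmP⟩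

theorem mem_iff_btw (hT : G.IsTree) {a b x : V} :
    x ∈ PathSet G a b ↔ Btw G a x b := by
  refine ⟨btw_of_mem hT, fun h => ?_⟩
  obtain ⟨m, h1, h2, h3⟩ := exists_med hT a x b
  have b1 := btw_of_mem hT h1
  have b2 := btw_of_mem hT h2
  have b3 := btw_of_mem hT h3
  unfold Btw at *
  have hcm : G.dist m x = G.dist x m := SimpleGraph.dist_comm ..
  have hz : G.dist x m = 0 := by omega
  have hxm : x = m := (dist0 hT).mp hz
  rw [hxm]; exact h3

end Bnm

namespace Bnm
set_option linter.unusedSectionVars false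
set_option linter.unusedVariables false

variable {V : Type} [Fintype V] [DecidableEq V] {G : SimpleGraph V}

/-- `m` is the median of `a, b, c`. -/
def IsMedV (G : SimpleGraph V) (m a b c : V) : Prop :=
  Btw G a m b ∧ Btw G a m c ∧ Btw G b m c

theorem dc (G : SimpleGraph V) (a b : V) : G.dist a b = G.dist b a :=
  SimpleGraph.dist_comm ..

theorem btw_comm {a b c : V} (h : Btw G a b c) : Btw G c b a := by
  unfold Btw at *
  have := dc G a b; have := dc G b c; have := dc G a c
  omega

theorem btw_left (G : SimpleGraph V) (a c : V) : Btw G a a c := by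
  unfold Btw; simp

theorem btw_right (G : SimpleGraph V) (a c : V) : Btw G a c c := by
  unfold Btw; simp

theorem btw_self_eq (hT : G.IsTree) {a b : V} (h : Btw G a b a) : b = a := by
  unfold Btw at h
  have := dc G a b
  have h0 : G.dist a a = 0 := (dist0 hT).mpr rfl
  have : G.dist b a = 0 := by omega
  exact (dist0 hT).mp this

theorem exists_medB (hT : G.IsTree) (a b c : V) : ∃ m, IsMedV G m a b c := by
  obtain ⟨m, h1, h2, h3⟩ := exists_med hT a b c
  exact ⟨m, (mem_iff_btw hT).mp h1, (mem_iff_btw hT).mp h3,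
    btw_comm ((mem_iff_btw hT).mp (mem_pathSet_symm h2))⟩

/-- Comparability along a path: if `x, y` both lie between `a` and `b`,
then `y ∈ [a,x]` or `y ∈ [x,b]`. -/
theorem btw_cases (hT : G.IsTree) {a b x y : V} (hx : Btw G a x b) (hy : Btw G a y b) :
    Btw G a y x ∨ Btw G x y b := by
  have h1 : x ∈ PathSet G a b := (mem_iff_btw hT).mpr hx
  have h2 : y ∈ PathSet G a b := (mem_iff_btw hT).mpr hy
  rw [pathSet_split hT h1, Set.mem_union] at h2
  rcases h2 with h2 | h2
  · exact Or.inl ((mem_iff_btw hT).mp h2)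
  · exact Or.inr ((mem_iff_btw hT).mp h2)

theorem btw_uniq (hT : G.IsTree) {a b x y : V} (hx : Btw G a x b) (hy : Btw G a y b)
    (hd : G.dist a x = G.dist a y) : x = y := by
  rcases btw_cases hT hx hy with h | h
  · unfold Btw at *
    have := dc G y x
    have : G.dist x y = 0 := by omega
    exact ((dist0 hT).mp this)
  · unfold Btw at *
    have : G.dist x y = 0 := by omega
    exact ((dist0 hT).mp this)

/-- The union lemma: any point between `a` and `b` is between `a` and `t`
or between `t` and `b`, for arbitrary `t`. -/
theorem btw_union (hT : G.IsTree) {a b x : V} (t : V) (hx : Btw G a x b) :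
    Btw G a x t ∨ Btw G t x b := by
  obtain ⟨m, hm1, hm2, hm3⟩ := exists_medB hT a b t
  rcases btw_cases hT hm1 hx with h | h
  · -- x between a and m : x between a and t
    left
    unfold Btw at *
    have t1 := tri hT x m t
    have t2 := tri hT a x t
    have := dc G x m; have := dc G m t; have := dc G a x; have := dc G x t
    omega
  · -- x between m and b : x between t and b
    right
    unfold Btw at *
    have t1 := tri hT t m x
    have t2 := tri hT t x b
    have := dc G m x; have := dc G t m; have := dc G t x; have := dc G x b
    have := dc G m b; have := dc G b t; have := dc G a m
    omega

theorem flank (hT : G.IsTree) {u v : V} (hne : v ≠ u) :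
    ∃ s, G.Adj v s ∧ Btw G v s u := by
  have hp := tpath_isPath hT v u
  set p := tpath hT v u with hpdef
  clear_value p
  cases p with
  | nil => exact absurd rfl hne
  | @cons _ s _ h q =>
    refine ⟨s, h, (mem_iff_btw hT).mp ?_⟩
    exact ⟨Walk.cons h q, hp, by simp [Walk.support_cons]⟩

theorem adj_dist_one {u v : V} (h : G.Adj u v) : G.dist u v = 1 :=
  SimpleGraph.dist_eq_one_iff_adj.mpr h

/-- Distance to a neighbor changes by exactly one. -/
theorem adj_btw_cases (hT : G.IsTree) {x y : V} (h : G.Adj x y) (v : V) :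
    Btw G v x y ∨ Btw G v y x := by
  obtain ⟨m, hm1, hm2, hm3⟩ := exists_medB hT x v y
  -- hm1 : Btw x m v, hm2 : Btw x m y, hm3 : Btw v m y
  have hd : G.dist x y = 1 := adj_dist_one h
  have hm2' := hm2
  unfold Btw at hm2'
  rw [hd] at hm2'
  have h0 : G.dist x m = 0 ∨ G.dist m y = 0 := by omega
  rcases h0 with h0 | h0
  · have hmx : m = x := ((dist0 hT).mp h0).symm
    subst hmx
    exact Or.inl hm3
  · have hmy : m = y := (dist0 hT).mp h0
    subst hmy
    exact Or.inr (btw_comm hm1)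

/-- If `s ≠ t` are at distance one from `v`, with `x` behind `s` and `y` behind `t`,
then `v` is between `x` and `y`. -/
theorem mednbr (hT : G.IsTree) {x y s t v : V} (h1 : Btw G x s v) (h2 : Btw G y t v)
    (hst : s ≠ t) (ds : G.dist s v = 1) (dt : G.dist t v = 1) : Btw G x v y := by
  obtain ⟨m, hm1, hm2, hm3⟩ := exists_medB hT x y v
  -- hm1 : Btw x m y, hm2 : Btw x m v, hm3 : Btw y m v
  rcases eq_or_ne m v with rfl | hmv
  · exact hm1
  · obtain ⟨u0, hu0a, hu0b⟩ := flank hT (Ne.symm hmv)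
    -- hu0b : Btw v u0 m
    have hd0 : G.dist v u0 = 1 := adj_dist_one hu0a
    have hx : Btw G v u0 x := by
      unfold Btw at *
      have t1 := tri hT u0 m x
      have t2 := tri hT v u0 x
      have := dc G x m; have := dc G m v; have := dc G v m; have := dc G m x
      have := dc G x v; have := dc G v x
      omega
    have hy : Btw G v u0 y := by
      unfold Btw at *
      have t1 := tri hT u0 m y
      have t2 := tri hT v u0 y
      have := dc G y m; have := dc G m v; have := dc G m y
      have := dc G y v; have := dc G v y
      omega
    have hus : u0 = s := by
      refine btw_uniq hT hx (btw_comm h1) ?_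
      have := dc G s v; have := dc G v s
      omega
    have hut : u0 = t := by
      refine btw_uniq hT hy (btw_comm h2) ?_
      have := dc G t v; have := dc G v t
      omega
    exact absurd (hus.symm.trans hut) hst

theorem btw_pair (hT : G.IsTree) {u v t : V} (hd : G.dist u v = 1) (h : Btw G u t v) :
    t = u ∨ t = v := by
  unfold Btw at h
  have h0 : G.dist u t = 0 ∨ G.dist t v = 0 := by omega
  rcases h0 with h0 | h0
  · exact Or.inl ((dist0 hT).mp h0).symm
  · exact Or.inr ((dist0 hT).mp h0)

/-- Projection: if `u` is the median of `a,b,c` and `t` lies between `a` and `b`,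
then `u` lies between `t` and `c`. -/
theorem tproj (hT : G.IsTree) {u a b c t : V} (hm : IsMedV G u a b c)
    (ht : Btw G a t b) : Btw G t u c := by
  obtain ⟨h1, h2, h3⟩ := hm
  rcases btw_cases hT h1 ht with h | h
  · -- t between a and u
    unfold Btw at *
    have t1 := tri hT t u c
    have t2 := tri hT a t c
    have := dc G t u; have := dc G u t; have := dc G a t; have := dc G t c
    omega
  · -- t between u and b
    unfold Btw at *
    have t1 := tri hT t u c
    have t2 := tri hT b t c
    have := dc G t u; have := dc G u t; have := dc G b t; have := dc G t c
    have := dc G b u; have := dc G u b; have := dc G a u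
    omega

theorem nbr_finite (G : SimpleGraph V) (v : V) : (G.neighborSet v).Finite :=
  Set.toFinite _

/-- In a tree, a vertex of degree 3 has no fourth branch: if `u` is the median of
`x, y, z` (all different from `u`), then no `w` can see `u` on all three paths. -/
theorem no_fourth (hT : G.IsTree) {u x y z w : V} (hm : IsMedV G u x y z)
    (hdeg : vdeg G u = 3) (hux : u ≠ x) (huy : u ≠ y) (huz : u ≠ z) (hw : w ≠ u)
    (bx : Btw G w u x) (by' : Btw G w u y) (bz : Btw G w u z) : False := by
  obtain ⟨h1, h2, h3⟩ := hm
  obtain ⟨sx, hsxa, hsxb⟩ := flank hT hux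
  obtain ⟨sy, hsya, hsyb⟩ := flank hT huy
  obtain ⟨sz, hsza, hszb⟩ := flank hT huz
  have dsx : G.dist u sx = 1 := adj_dist_one hsxa
  have dsy : G.dist u sy = 1 := adj_dist_one hsya
  have dsz : G.dist u sz = 1 := adj_dist_one hsza
  have hxy : sx ≠ sy := by
    rintro rfl
    unfold Btw at *
    have t1 := tri hT x sx y
    have := dc G u sx; have := dc G sx x; have := dc G x sx; have := dc G sx y
    have := dc G u x; have := dc G x u; have := dc G u y
    omega
  have hxz : sx ≠ sz := by
    rintro rfl
    unfold Btw at *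
    have t1 := tri hT x sx z
    have := dc G u sx; have := dc G sx x; have := dc G x sx; have := dc G sx z
    have := dc G u x; have := dc G x u; have := dc G u z
    omega
  have hyz : sy ≠ sz := by
    rintro rfl
    unfold Btw at *
    have t1 := tri hT y sy z
    have := dc G u sy; have := dc G sy y; have := dc G y sy; have := dc G sy z
    have := dc G u y; have := dc G y u; have := dc G u z
    omega
  obtain ⟨s, hsa, hsb⟩ := flank hT (Ne.symm hw)
  have dss : G.dist u s = 1 := adj_dist_one hsa
  have hsub : ({sx, sy, sz} : Set V) ⊆ G.neighborSet u := by
    intro t ht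
    rcases ht with rfl | rfl | rfl
    · exact hsxa
    · exact hsya
    · exact hsza
  have hcard : ({sx, sy, sz} : Set V).ncard = 3 :=
    Set.ncard_eq_three.mpr ⟨sx, sy, sz, hxy, hxz, hyz, rfl⟩
  have heq : ({sx, sy, sz} : Set V) = G.neighborSet u :=
    Set.eq_of_subset_of_ncard_le hsub (by rw [hcard]; exact le_of_eq hdeg)
    (nbr_finite G u)
  have hsmem : s ∈ ({sx, sy, sz} : Set V) := heq ▸ (hsa : s ∈ G.neighborSet u)
  have contra : ∀ c, Btw G u s c → Btw G w u c → False := by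
    intro c hsc hwc
    unfold Btw at *
    have t1 := tri hT w s c
    have := dc G u s; have := dc G s w; have := dc G w s
    have := dc G w u; have := dc G u w; have := dc G s c
    omega
  rcases hsmem with h | h | h
  · exact contra x (by rw [h]; exact hsxb) bx
  · exact contra y (by rw [h]; exact hsyb) by'
  · exact contra z (by rw [h]; exact hszb) bz

/-- A leaf is never strictly interior to a path. -/
theorem leaf_not_interior (hT : G.IsTree) {a b ℓ : V} (hdeg : vdeg G ℓ ≤ 1)
    (h : Btw G a ℓ b) (ha : ℓ ≠ a) (hb : ℓ ≠ b) : False := by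
  obtain ⟨s, hsa, hsb⟩ := flank hT ha
  obtain ⟨t, hta, htb⟩ := flank hT hb
  have ds : G.dist ℓ s = 1 := adj_dist_one hsa
  have dt : G.dist ℓ t = 1 := adj_dist_one hta
  have hst : s ≠ t := by
    rintro rfl
    unfold Btw at *
    have t1 := tri hT a s b
    have := dc G ℓ s; have := dc G s a; have := dc G a s; have := dc G s b
    have := dc G a ℓ; have := dc G ℓ a; have := dc G ℓ b
    omega
  have : 1 < (G.neighborSet ℓ).ncard := by
    rw [Set.one_lt_ncard_iff (nbr_finite G ℓ)]
    exact ⟨s, t, hsa, hta, hst⟩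
  exact absurd hdeg (by unfold vdeg; omega)

/-- Every nontrivial path leaving a leaf goes through its unique neighbor. -/
theorem leaf_nbr (hT : G.IsTree) {ℓ s : V} (hdeg : vdeg G ℓ ≤ 1) (hs : G.Adj ℓ s) :
    ∀ w, w ≠ ℓ → Btw G w s ℓ := by
  intro w hw
  obtain ⟨s', hs'a, hs'b⟩ := flank hT (Ne.symm hw)
  have : s' = s := by
    have h1 : s' ∈ G.neighborSet ℓ := hs'a
    have h2 : s ∈ G.neighborSet ℓ := hs
    exact (Set.ncard_le_one (nbr_finite G ℓ)).mp (by unfold vdeg at hdeg; exact hdeg) s' h1 s h2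
  subst this
  exact btw_comm hs'b

/-- Extension to a leaf: if `c` is a neighbor of `v` in a tree all of whose vertices
have degree `≤ 1` or `= 3`, there is a leaf behind `c` as seen from `v`. -/
theorem ext_leaf (hT : G.IsTree) {v c : V} (hac : G.Adj v c)
    (hdich : ∀ t, vdeg G t ≤ 1 ∨ vdeg G t = 3) :
    ∃ ℓ, vdeg G ℓ ≤ 1 ∧ Btw G ℓ c v := by
  classical
  have hcv : G.dist c v = 1 := adj_dist_one hac.symm
  set S : Finset V := Finset.univ.filter (fun y => Btw G y c v) with hS
  have hcS : c ∈ S := by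
    simp only [hS, Finset.mem_filter, Finset.mem_univ, true_and]
    unfold Btw
    simp [(dist0 hT).mpr rfl]
  obtain ⟨ℓ, hℓS, hmax⟩ := Finset.exists_max_image S (fun y => G.dist y v) ⟨c, hcS⟩
  have hℓb : Btw G ℓ c v := by
    simp only [hS, Finset.mem_filter] at hℓS
    exact hℓS.2
  refine ⟨ℓ, ?_, hℓb⟩
  by_contra hdeg
  have hdeg3 : vdeg G ℓ = 3 := (hdich ℓ).resolve_left hdeg
  have hℓv : ℓ ≠ v := by
    intro hh
    rw [hh] at hℓb
    have hcv2 := btw_self_eq hT hℓb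
    rw [hcv2] at hac
    exact G.loopless.irrefl v hac
  obtain ⟨s, hsa, hsb⟩ := flank hT hℓv
  have hds : G.dist ℓ s = 1 := adj_dist_one hsa
  have h13 : 1 < (G.neighborSet ℓ).ncard := by unfold vdeg at hdeg3; omega
  obtain ⟨y, hy, hys⟩ := Set.exists_ne_of_one_lt_ncard h13 s
  have hya : G.Adj ℓ y := hy
  have hdy : G.dist ℓ y = 1 := adj_dist_one hya
  have hycase : Btw G v ℓ y := by
    rcases adj_btw_cases hT hya v with h | h
    · exact h
    · -- Btw v y ℓ gives y = s, contradiction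
      exfalso
      refine hys (btw_uniq hT (btw_comm h) hsb ?_)
      unfold Btw at h
      have := dc G y ℓ; have := dc G ℓ y; have := dc G ℓ v; have := dc G v y
      omega
  have hyb : Btw G y c v := by
    unfold Btw at *
    have t1 := tri hT y ℓ c
    have t2 := tri hT y c v
    have := dc G ℓ y; have := dc G y ℓ; have := dc G v ℓ; have := dc G ℓ v
    have := dc G y v; have := dc G v y; have := dc G ℓ c; have := dc G c ℓ
    omega
  have hyS : y ∈ S := by
    simp only [hS, Finset.mem_filter, Finset.mem_univ, true_and]
    exact hyb
  have := hmax y hyS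
  -- d y v = d ℓ v + 1 > d ℓ v, contradiction
  unfold Btw at hℓb hyb hycase
  have := dc G v ℓ; have := dc G ℓ v; have := dc G y v; have := dc G v y
  omega

end Bnm
namespace Bnm
set_option linter.unusedSectionVars false
set_option linter.unusedVariables false
set_option maxHeartbeats 1000000

variable {X : Type}

/-- Median predicate at the level of taxa. -/
def IsMedT (T : UBTree X) (v : Fin T.n) (x y z : X) : Prop :=
  IsMedV T.G v (T.lab x) (T.lab y) (T.lab z)

theorem medV_perm12 {V : Type} [Fintype V] [DecidableEq V] {G : SimpleGraph V} {m a b c : V}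
    (h : IsMedV G m a b c) : IsMedV G m b a c :=
  ⟨btw_comm h.1, h.2.2, h.2.1⟩

theorem medV_perm23 {V : Type} [Fintype V] [DecidableEq V] {G : SimpleGraph V} {m a b c : V}
    (h : IsMedV G m a b c) : IsMedV G m a c b :=
  ⟨h.2.1, h.1, btw_comm h.2.2⟩

theorem medV_perm13 {V : Type} [Fintype V] [DecidableEq V] {G : SimpleGraph V} {m a b c : V}
    (h : IsMedV G m a b c) : IsMedV G m c b a :=
  medV_perm12 (medV_perm23 (medV_perm12 h))

theorem medV_rot {V : Type} [Fintype V] [DecidableEq V] {G : SimpleGraph V} {m a b c : V}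
    (h : IsMedV G m a b c) : IsMedV G m b c a :=
  medV_perm23 (medV_perm12 h)

theorem medT_perm12 {T : UBTree X} {v : Fin T.n} {x y z : X}
    (h : IsMedT T v x y z) : IsMedT T v y x z := medV_perm12 h

theorem medT_perm23 {T : UBTree X} {v : Fin T.n} {x y z : X}
    (h : IsMedT T v x y z) : IsMedT T v x z y := medV_perm23 h

theorem medT_perm13 {T : UBTree X} {v : Fin T.n} {x y z : X}
    (h : IsMedT T v x y z) : IsMedT T v z y x := medV_perm13 h

theorem medT_rot {T : UBTree X} {v : Fin T.n} {x y z : X}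
    (h : IsMedT T v x y z) : IsMedT T v y z x := medV_rot h

theorem medV_uniq {V : Type} [Fintype V] [DecidableEq V] {G : SimpleGraph V}
    (hT : G.IsTree) {m m' a b c : V} (h : IsMedV G m a b c) (h' : IsMedV G m' a b c) :
    m = m' := by
  obtain ⟨h1, h2, h3⟩ := h
  obtain ⟨h1', h2', h3'⟩ := h'
  refine btw_uniq hT h1 h1' ?_
  unfold Btw at *
  have := dc G m b; have := dc G m' b; have := dc G b m; have := dc G b m'
  have := dc G m c; have := dc G m' c
  omega

section UB

variable (T : UBTree X)

theorem ub_dich : ∀ t, vdeg T.G t ≤ 1 ∨ vdeg T.G t = 3 := by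
  intro t
  by_cases h : t ∈ Set.range T.lab
  · exact Or.inl ((T.leaf_iff t).mp h)
  · exact Or.inr (T.internal_deg t h)

theorem lab_leaf (x : X) : vdeg T.G (T.lab x) ≤ 1 :=
  (T.leaf_iff _).mp ⟨x, rfl⟩

variable {T}

theorem medT_not_lab {v : Fin T.n} {x y z : X} (hd : allDiff3 x y z)
    (hm : IsMedT T v x y z) : v ∉ Set.range T.lab := by
  obtain ⟨hxy, hxz, hyz⟩ := hd
  rintro ⟨w, rfl⟩
  obtain ⟨h1, h2, h3⟩ := hm
  by_cases hwx : w = x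
  · subst hwx
    exact leaf_not_interior T.isTree (lab_leaf T w) h3
      (fun hh => hxy (T.lab_inj hh)) (fun hh => hxz (T.lab_inj hh))
  · by_cases hwy : w = y
    · subst hwy
      exact leaf_not_interior T.isTree (lab_leaf T w) h2
        (fun hh => hwx (T.lab_inj hh)) (fun hh => hyz (T.lab_inj hh))
    · exact leaf_not_interior T.isTree (lab_leaf T w) h1
        (fun hh => hwx (T.lab_inj hh)) (fun hh => hwy (T.lab_inj hh))

theorem medT_ne_lab {v : Fin T.n} {x y z : X} (hd : allDiff3 x y z)
    (hm : IsMedT T v x y z) (w : X) : v ≠ T.lab w := by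
  intro hh
  exact medT_not_lab hd hm ⟨w, hh.symm⟩

theorem medT_deg3 {v : Fin T.n} {x y z : X} (hd : allDiff3 x y z)
    (hm : IsMedT T v x y z) : vdeg T.G v = 3 :=
  T.internal_deg v (medT_not_lab hd hm)

/-- Every internal vertex is the median of three distinct taxa. -/
theorem rep_internal {v : Fin T.n} (hv : v ∉ Set.range T.lab) :
    ∃ x y z : X, allDiff3 x y z ∧ IsMedT T v x y z := by
  classical
  have hdeg : vdeg T.G v = 3 := T.internal_deg v hv
  unfold vdeg at hdeg
  obtain ⟨n1, n2, n3, h12, h13, h23, hset⟩ := Set.ncard_eq_three.mp hdeg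
  have ha1 : T.G.Adj v n1 := by rw [← SimpleGraph.mem_neighborSet, hset]; simp
  have ha2 : T.G.Adj v n2 := by rw [← SimpleGraph.mem_neighborSet, hset]; simp
  have ha3 : T.G.Adj v n3 := by rw [← SimpleGraph.mem_neighborSet, hset]; simp
  obtain ⟨ℓ1, hl1, hb1⟩ := ext_leaf T.isTree ha1 (ub_dich T)
  obtain ⟨ℓ2, hl2, hb2⟩ := ext_leaf T.isTree ha2 (ub_dich T)
  obtain ⟨ℓ3, hl3, hb3⟩ := ext_leaf T.isTree ha3 (ub_dich T)
  obtain ⟨x, hx⟩ := (T.leaf_iff ℓ1).mpr hl1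
  obtain ⟨y, hy⟩ := (T.leaf_iff ℓ2).mpr hl2
  obtain ⟨z, hz⟩ := (T.leaf_iff ℓ3).mpr hl3
  subst hx; subst hy; subst hz
  have d1 : T.G.dist n1 v = 1 := adj_dist_one ha1.symm
  have d2 : T.G.dist n2 v = 1 := adj_dist_one ha2.symm
  have d3 : T.G.dist n3 v = 1 := adj_dist_one ha3.symm
  have m12 : Btw T.G (T.lab x) v (T.lab y) := mednbr T.isTree hb1 hb2 h12 d1 d2
  have m13 : Btw T.G (T.lab x) v (T.lab z) := mednbr T.isTree hb1 hb3 h13 d1 d3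
  have m23 : Btw T.G (T.lab y) v (T.lab z) := mednbr T.isTree hb2 hb3 h23 d2 d3
  have hne : ∀ a b : X, Btw T.G (T.lab a) v (T.lab b) → a ≠ b := by
    intro a b hab heq
    subst heq
    exact hv ⟨a, (btw_self_eq T.isTree hab).symm⟩
  exact ⟨x, y, z, ⟨hne x y m12, hne x z m13, hne y z m23⟩, m12, m13, m23⟩

/-- Third-branch representation: an internal vertex strictly inside the path
between taxa `a` and `b` is the median of `a`, `b` and some third taxon. -/
theorem rep_third {v : Fin T.n} (hv : v ∉ Set.range T.lab) {a b : X}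
    (h : Btw T.G (T.lab a) v (T.lab b)) :
    ∃ w : X, w ≠ a ∧ w ≠ b ∧ IsMedT T v a b w := by
  classical
  have hva : v ≠ T.lab a := fun hh => hv ⟨a, hh.symm⟩
  have hvb : v ≠ T.lab b := fun hh => hv ⟨b, hh.symm⟩
  obtain ⟨s1, hs1a, hs1b⟩ := flank T.isTree hva
  obtain ⟨s2, hs2a, hs2b⟩ := flank T.isTree hvb
  have ds1 : T.G.dist s1 v = 1 := by
    have := adj_dist_one hs1a; have := dc T.G v s1; omega
  have ds2 : T.G.dist s2 v = 1 := by
    have := adj_dist_one hs2a; have := dc T.G v s2; omega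
  have hs12 : s1 ≠ s2 := by
    rintro rfl
    unfold Btw at *
    have t1 := tri T.isTree (T.lab a) s1 (T.lab b)
    have := dc T.G v s1; have := dc T.G s1 (T.lab a); have := dc T.G (T.lab a) s1
    have := dc T.G s1 (T.lab b); have := dc T.G (T.lab a) v; have := dc T.G v (T.lab a)
    have := dc T.G v (T.lab b)
    omega
  have hdeg : vdeg T.G v = 3 := T.internal_deg v hv
  unfold vdeg at hdeg
  have hex : ∃ c ∈ T.G.neighborSet v, c ≠ s1 ∧ c ≠ s2 := by
    by_contra hcon
    push_neg at hcon
    have hsub : T.G.neighborSet v ⊆ {s1, s2} := by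
      intro c hc
      by_cases h1 : c = s1
      · exact h1 ▸ Set.mem_insert _ _
      · have : c = s2 := hcon c hc h1
        exact this ▸ Set.mem_insert_of_mem _ rfl
    have := Set.ncard_le_ncard hsub (Set.toFinite _)
    rw [Set.ncard_pair hs12] at this
    omega
  obtain ⟨c, hc, hcs1, hcs2⟩ := hex
  have hca : T.G.Adj v c := hc
  obtain ⟨ℓ, hlleaf, hlb⟩ := ext_leaf T.isTree hca (ub_dich T)
  obtain ⟨w, hw⟩ := (T.leaf_iff ℓ).mpr hlleaf
  subst hw
  have dcv : T.G.dist c v = 1 := adj_dist_one hca.symm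
  have mw1 : Btw T.G (T.lab a) v (T.lab w) :=
    mednbr T.isTree (btw_comm hs1b) hlb (fun hh => hcs1 hh.symm) ds1 dcv
  have mw2 : Btw T.G (T.lab b) v (T.lab w) :=
    mednbr T.isTree (btw_comm hs2b) hlb (fun hh => hcs2 hh.symm) ds2 dcv
  have hne : ∀ p q : X, Btw T.G (T.lab p) v (T.lab q) → p ≠ q := by
    intro p q hpq heq
    subst heq
    exact hv ⟨p, (btw_self_eq T.isTree hpq).symm⟩
  exact ⟨w, fun hh => (hne a w mw1) hh.symm, fun hh => (hne b w mw2) hh.symm, h, mw1, mw2⟩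

/-- Unfolding quartets pointwise. -/
theorem quartet_pointwise {a b c d : X} (hq : T.Quartet a b c d) {t : Fin T.n}
    (h1 : Btw T.G (T.lab a) t (T.lab b)) (h2 : Btw T.G (T.lab c) t (T.lab d)) : False := by
  exact Set.disjoint_left.mp hq ((mem_iff_btw T.isTree).mpr h1) ((mem_iff_btw T.isTree).mpr h2)

theorem quartet_of {a b c d : X}
    (h : ∀ t : Fin T.n, Btw T.G (T.lab a) t (T.lab b) → Btw T.G (T.lab c) t (T.lab d) → False) :
    T.Quartet a b c d :=
  Set.disjoint_left.mpr (fun {t} h1 h2 =>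
    h t ((mem_iff_btw T.isTree).mp h1) ((mem_iff_btw T.isTree).mp h2))

theorem quartet_ends {a b c d : X} (hq : T.Quartet a b c d) :
    a ≠ c ∧ a ≠ d ∧ b ≠ c ∧ b ≠ d := by
  refine ⟨?_, ?_, ?_, ?_⟩ <;> rintro rfl
  · exact quartet_pointwise hq (btw_left T.G _ _) (btw_left T.G _ _)
  · exact quartet_pointwise hq (btw_left T.G _ _) (btw_right T.G _ _)
  · exact quartet_pointwise hq (btw_right T.G _ _) (btw_left T.G _ _)
  · exact quartet_pointwise hq (btw_right T.G _ _) (btw_right T.G _ _)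

/-- The branch lemma: relative to the median `v` of `x, y, z`, a taxon `w` hangs in
the branch of `x` iff `w = x` or the quartet `wx|yz` is displayed. -/
theorem branch_iff {v : Fin T.n} {x y z : X} (hd : allDiff3 x y z)
    (hm : IsMedT T v x y z) (w : X) :
    (¬ Btw T.G (T.lab w) v (T.lab x)) ↔ (w = x ∨ T.Quartet w x y z) := by
  obtain ⟨h1, h2, h3⟩ := hm
  constructor
  · intro hb
    by_cases hwx : w = x
    · exact Or.inl hwx
    · refine Or.inr (quartet_of (fun t ht1 ht2 => ?_))
      -- ht1 : Btw w t x, ht2 : Btw y t z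
      have GG := T.G
      set lw := T.lab w with hlw; set lx := T.lab x with hlx
      set ly := T.lab y with hly; set lz := T.lab z with hlz
      have hA1 : Btw T.G t v ly := by
        rcases btw_union T.isTree t h1 with hA | hA
        · exfalso
          apply hb
          unfold Btw at *
          have t1 := tri T.isTree lw t v
          have t2 := tri T.isTree lw v lx
          have := dc T.G lw v; have := dc T.G v lw; have := dc T.G t v; have := dc T.G v t
          have := dc T.G lx v; have := dc T.G v lx; have := dc T.G t lx; have := dc T.G lx t
          have := dc T.G lw t; have := dc T.G t lw; have := dc T.G lw lx; have := dc T.G lx lw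
          omega
        · exact hA
      have hA2 : Btw T.G t v lz := by
        rcases btw_union T.isTree t h2 with hA | hA
        · exfalso
          apply hb
          unfold Btw at *
          have t1 := tri T.isTree lw t v
          have t2 := tri T.isTree lw v lx
          have := dc T.G lw v; have := dc T.G v lw; have := dc T.G t v; have := dc T.G v t
          have := dc T.G lx v; have := dc T.G v lx; have := dc T.G t lx; have := dc T.G lx t
          have := dc T.G lw t; have := dc T.G t lw; have := dc T.G lw lx; have := dc T.G lx lw
          omega
        · exact hA
      have htv : t = v := by
        unfold Btw at *
        have := dc T.G ly t; have := dc T.G t ly; have := dc T.G v ly; have := dc T.G ly v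
        have := dc T.G t v; have := dc T.G v t; have := dc T.G lz v; have := dc T.G v lz
        have h0 : T.G.dist t v = 0 := by omega
        exact (dist0 T.isTree).mp h0
      rw [htv] at ht1
      exact hb ht1
  · rintro (rfl | hq)
    · intro hb
      have : v = T.lab w := btw_self_eq T.isTree hb
      exact medT_not_lab hd ⟨h1, h2, h3⟩ ⟨w, this.symm⟩
    · intro hb
      exact quartet_pointwise hq hb h3

end UB
end Bnm
namespace Bnm
set_option linter.unusedSectionVars false
set_option linter.unusedVariables false
set_option maxHeartbeats 2000000

variable {X : Type}

theorem ad12 {a b c : X} (h : allDiff3 a b c) : allDiff3 b a c :=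
  ⟨h.1.symm, h.2.2, h.2.1⟩

theorem ad13 {a b c : X} (h : allDiff3 a b c) : allDiff3 c b a :=
  ⟨h.2.2.symm, h.2.1.symm, h.1.symm⟩

theorem l2t {T : UBTree X} {v : Fin T.n} {x y z : X} (hd : allDiff3 x y z)
    (hm : IsMedT T v x y z) (w : X) :
    ¬ Btw T.G (T.lab w) v (T.lab x) ∨ ¬ Btw T.G (T.lab w) v (T.lab y) ∨
      ¬ Btw T.G (T.lab w) v (T.lab z) := by
  by_contra hcon
  push_neg at hcon
  obtain ⟨bx, by', bz⟩ := hcon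
  exact no_fourth T.isTree hm (medT_deg3 hd hm) (medT_ne_lab hd hm x)
    (medT_ne_lab hd hm y) (medT_ne_lab hd hm z)
    (Ne.symm (medT_ne_lab hd hm w)) bx by' bz

theorem step2 {T : UBTree X} {u : Fin T.n} {a b c : X} (hu : IsMedT T u a b c) {w : X}
    (h : w = a ∨ ¬ Btw T.G (T.lab w) u (T.lab a)) : IsMedT T u w b c := by
  rcases h with rfl | h
  · exact hu
  obtain ⟨h1, h2, h3⟩ := hu
  have hb : Btw T.G (T.lab w) u (T.lab b) := by
    rcases btw_union T.isTree (T.lab w) h1 with hA | hA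
    · exact absurd (btw_comm hA) h
    · exact hA
  have hc : Btw T.G (T.lab w) u (T.lab c) := by
    rcases btw_union T.isTree (T.lab w) h2 with hA | hA
    · exact absurd (btw_comm hA) h
    · exact hA
  exact ⟨hb, hc, h3⟩

theorem clash {T : UBTree X} {v : Fin T.n} {w1 w2 t : X}
    (hbtw : Btw T.G (T.lab w1) v (T.lab w2))
    (ha : ¬ Btw T.G (T.lab w1) v (T.lab t))
    (hb : ¬ Btw T.G (T.lab w2) v (T.lab t)) : False := by
  rcases btw_union T.isTree (T.lab t) hbtw with h | h
  · exact ha h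
  · exact hb (btw_comm h)

theorem sb_transfer {T1 T2 : UBTree X}
    (hQ : ∀ a b c d, allDiff4 a b c d → (T1.Quartet a b c d ↔ T2.Quartet a b c d))
    {v : Fin T1.n} {t r1 r2 : X} (hd : allDiff3 t r1 r2)
    (hm1 : IsMedT T1 v t r1 r2)
    {u : Fin T2.n} (hu : Btw T2.G (T2.lab r1) u (T2.lab r2))
    {w : X} (hb : ¬ Btw T1.G (T1.lab w) v (T1.lab t)) :
    w = t ∨ ¬ Btw T2.G (T2.lab w) u (T2.lab t) := by
  by_cases hwt : w = t
  · exact Or.inl hwt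
  rcases (branch_iff hd hm1 w).mp hb with h | hq
  · exact Or.inl h
  · right
    obtain ⟨hwr1, hwr2, _, _⟩ := quartet_ends hq
    have had4 : allDiff4 w t r1 r2 := ⟨hwt, hwr1, hwr2, hd.1, hd.2.1, hd.2.2⟩
    have q2 : T2.Quartet w t r1 r2 := (hQ w t r1 r2 had4).mp hq
    intro hbtw2
    exact quartet_pointwise q2 hbtw2 hu

theorem trans_id {T : UBTree X} {u : Fin T.n} {a b c xx yy zz : X}
    (hu : IsMedT T u a b c)
    (ha : xx = a ∨ ¬ Btw T.G (T.lab xx) u (T.lab a))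
    (hb : yy = b ∨ ¬ Btw T.G (T.lab yy) u (T.lab b))
    (hc : zz = c ∨ ¬ Btw T.G (T.lab zz) u (T.lab c)) :
    IsMedT T u xx yy zz := by
  have s1 : IsMedT T u xx b c := step2 hu ha
  have s2 : IsMedT T u yy xx c := step2 (medT_perm12 s1) hb
  have s3 : IsMedT T u zz yy xx := step2 (medT_rot (medT_rot s2)) hc
  exact medT_perm13 s3

theorem trans_med {T1 T2 : UBTree X}
    (hQ : ∀ a b c d, allDiff4 a b c d → (T1.Quartet a b c d ↔ T2.Quartet a b c d))
    {v : Fin T1.n} {x y z x' y' z' : X}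
    (hd : allDiff3 x y z) (hd' : allDiff3 x' y' z')
    (h1 : IsMedT T1 v x y z) (h2 : IsMedT T1 v x' y' z')
    {u : Fin T2.n} (hu : IsMedT T2 u x y z) : IsMedT T2 u x' y' z' := by
  obtain ⟨e1, e2, e3⟩ := h2
  have Ax : ∀ w : X, ¬ Btw T1.G (T1.lab w) v (T1.lab x) →
      (w = x ∨ ¬ Btw T2.G (T2.lab w) u (T2.lab x)) :=
    fun w hw => sb_transfer hQ hd h1 hu.2.2 hw
  have Ay : ∀ w : X, ¬ Btw T1.G (T1.lab w) v (T1.lab y) →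
      (w = y ∨ ¬ Btw T2.G (T2.lab w) u (T2.lab y)) :=
    fun w hw => sb_transfer hQ (ad12 hd) (medT_perm12 h1) hu.2.1 hw
  have Az : ∀ w : X, ¬ Btw T1.G (T1.lab w) v (T1.lab z) →
      (w = z ∨ ¬ Btw T2.G (T2.lab w) u (T2.lab z)) :=
    fun w hw => sb_transfer hQ (ad13 hd) (medT_perm13 h1) (btw_comm hu.1) hw
  have Hx' := l2t hd h1 x'
  have Hy' := l2t hd h1 y'
  have Hz' := l2t hd h1 z'
  rcases Hx' with hx | hx | hx <;> rcases Hy' with hy | hy | hy <;>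
    rcases Hz' with hz | hz | hz <;>
    first
      | exact absurd (clash e1 hx hy) not_false
      | exact absurd (clash e2 hx hz) not_false
      | exact absurd (clash e3 hy hz) not_false
      | exact trans_id hu (Ax x' hx) (Ay y' hy) (Az z' hz)
      | exact trans_id (medT_perm12 hu) (Ay x' hx) (Ax y' hy) (Az z' hz)
      | exact trans_id (medT_perm23 hu) (Ax x' hx) (Az y' hy) (Ay z' hz)
      | exact trans_id (medT_perm13 hu) (Az x' hx) (Ay y' hy) (Ax z' hz)
      | exact trans_id (medT_rot hu) (Ay x' hx) (Az y' hy) (Ax z' hz)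
      | exact trans_id (medT_rot (medT_rot hu)) (Az x' hx) (Ax y' hy) (Ay z' hz)

end Bnm
namespace Bnm
set_option linter.unusedSectionVars false
set_option linter.unusedVariables false
set_option maxHeartbeats 2000000

variable {V : Type} [Fintype V] [DecidableEq V] {G : SimpleGraph V}

theorem btw_sub (hT : G.IsTree) {a m b c : V} (h1 : Btw G a m b) (h2 : Btw G a b c) :
    Btw G a m c := by
  unfold Btw at *
  have t1 := tri hT m b c
  have t2 := tri hT a m c
  have := dc G m b; have := dc G b c; have := dc G a m; have := dc G m c
  omega

theorem btw_mid (hT : G.IsTree) {a m b c : V} (h1 : Btw G a m b) (h2 : Btw G a b c) :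
    Btw G m b c := by
  unfold Btw at *
  have t1 := tri hT m b c
  have t2 := tri hT a m c
  have := dc G m b; have := dc G b c; have := dc G a m; have := dc G m c
  omega

theorem btw_sub2 (hT : G.IsTree) {a m v c : V} (h1 : Btw G a m c) (h2 : Btw G m v c) :
    Btw G a v c := by
  unfold Btw at *
  have t1 := tri hT a m v
  have t2 := tri hT a v c
  have := dc G a m; have := dc G m v; have := dc G a v; have := dc G v c
  omega

theorem btw_mid2 (hT : G.IsTree) {a m v c : V} (h1 : Btw G a m c) (h2 : Btw G m v c) :
    Btw G a m v := by
  unfold Btw at *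
  have t1 := tri hT a m v
  have t2 := tri hT a v c
  have := dc G a m; have := dc G m v; have := dc G a v; have := dc G v c
  omega

theorem btw_concat (hT : G.IsTree) {a b c d : V} (hbc : b ≠ c)
    (h1 : Btw G a b c) (h2 : Btw G b c d) : Btw G a c d := by
  obtain ⟨m, hm1, hm2, hm3⟩ := exists_medB hT a c d
  -- hm1 : Btw a m c, hm2 : Btw a m d, hm3 : Btw c m d
  rcases btw_cases hT h1 hm1 with h | h
  · -- h : Btw a m b, so m in [a,b]
    exfalso
    apply hbc
    unfold Btw at *
    have t1 := tri hT b m d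
    have := dc G a m; have := dc G m b; have := dc G b m; have := dc G a b
    have := dc G b c; have := dc G c m; have := dc G m c; have := dc G m d
    have := dc G c d; have := dc G b d; have := dc G d m
    have h0 : G.dist b c = 0 := by omega
    exact (dist0 hT).mp h0
  · -- h : Btw b m c
    have hmd : Btw G b m d := btw_sub hT h h2
    have hmc : m = c := by
      unfold Btw at *
      have := dc G b m; have := dc G m c; have := dc G c m; have := dc G b c
      have := dc G m d; have := dc G c d
      have h0 : G.dist m c = 0 := by omega
      exact (dist0 hT).mp h0
    rw [← hmc]
    exact hm2

variable {X : Type}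

/-- Choice of a median of three vertices. -/
noncomputable def medB (T : UBTree X) (a b c : Fin T.n) : Fin T.n :=
  (exists_medB T.isTree a b c).choose

theorem medB_spec (T : UBTree X) (a b c : Fin T.n) : IsMedV T.G (medB T a b c) a b c :=
  (exists_medB T.isTree a b c).choose_spec

/-- Choice of a representing triple of taxa for an internal vertex. -/
noncomputable def repT (T : UBTree X) (v : Fin T.n) (h : v ∉ Set.range T.lab) :
    X × X × X :=
  ((rep_internal h).choose, (rep_internal h).choose_spec.choose,
    (rep_internal h).choose_spec.choose_spec.choose)

theorem repT_spec (T : UBTree X) (v : Fin T.n) (h : v ∉ Set.range T.lab) :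
    allDiff3 (repT T v h).1 (repT T v h).2.1 (repT T v h).2.2 ∧
      IsMedT T v (repT T v h).1 (repT T v h).2.1 (repT T v h).2.2 :=
  (rep_internal h).choose_spec.choose_spec.choose_spec

open Classical in
/-- The canonical map between two quartet-equivalent trees. -/
noncomputable def phi (T1 T2 : UBTree X) (v : Fin T1.n) : Fin T2.n :=
  if h : v ∈ Set.range T1.lab then T2.lab h.choose
  else medB T2 (T2.lab (repT T1 v h).1) (T2.lab (repT T1 v h).2.1)
    (T2.lab (repT T1 v h).2.2)

theorem phi_lab (T1 T2 : UBTree X) (x : X) : phi T1 T2 (T1.lab x) = T2.lab x := by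
  have h : T1.lab x ∈ Set.range T1.lab := ⟨x, rfl⟩
  rw [phi, dif_pos h]
  exact congrArg T2.lab (T1.lab_inj h.choose_spec)

section Transfer

variable {T1 T2 : UBTree X}
  (hQ : ∀ a b c d, allDiff4 a b c d → (T1.Quartet a b c d ↔ T2.Quartet a b c d))

include hQ

theorem phi_med {v : Fin T1.n} (hv : v ∉ Set.range T1.lab) {x y z : X}
    (hd : allDiff3 x y z) (hm : IsMedT T1 v x y z) :
    IsMedT T2 (phi T1 T2 v) x y z := by
  rw [phi, dif_neg hv]
  obtain ⟨hd0, hm0⟩ := repT_spec T1 v hv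
  exact trans_med hQ hd0 hd hm0 hm (medB_spec T2 _ _ _)

theorem phi_internal {v : Fin T1.n} (hv : v ∉ Set.range T1.lab) :
    phi T1 T2 v ∉ Set.range T2.lab := by
  obtain ⟨hd0, hm0⟩ := repT_spec T1 v hv
  exact medT_not_lab hd0 (phi_med hQ hv hd0 hm0)

theorem hQsymm : ∀ a b c d, allDiff4 a b c d → (T2.Quartet a b c d ↔ T1.Quartet a b c d) :=
  fun a b c d h => (hQ a b c d h).symm

theorem phi_injective : Function.Injective (phi T1 T2) := by
  intro u v h
  by_cases hu : u ∈ Set.range T1.lab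
  · by_cases hv : v ∈ Set.range T1.lab
    · obtain ⟨x, rfl⟩ := hu
      obtain ⟨y, rfl⟩ := hv
      rw [phi_lab, phi_lab] at h
      exact congrArg T1.lab (T2.lab_inj h)
    · exfalso
      obtain ⟨x, rfl⟩ := hu
      rw [phi_lab] at h
      exact phi_internal hQ hv ⟨x, h⟩
  · by_cases hv : v ∈ Set.range T1.lab
    · exfalso
      obtain ⟨y, rfl⟩ := hv
      rw [phi_lab] at h
      exact phi_internal hQ hu ⟨y, h.symm⟩
    · obtain ⟨hdu, hmu⟩ := repT_spec T1 u hu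
      obtain ⟨hdv, hmv⟩ := repT_spec T1 v hv
      have h2u : IsMedT T2 (phi T1 T2 u) _ _ _ := phi_med hQ hu hdu hmu
      have h2v : IsMedT T2 (phi T1 T2 u) _ _ _ := h ▸ phi_med hQ hv hdv hmv
      have hback : IsMedT T1 u (repT T1 v hv).1 (repT T1 v hv).2.1 (repT T1 v hv).2.2 :=
        trans_med (hQsymm hQ) hdu hdv h2u h2v hmu
      exact medV_uniq T1.isTree hback hmv

theorem phi_surjective : Function.Surjective (phi T1 T2) := by
  intro w
  by_cases hw : w ∈ Set.range T2.lab
  · obtain ⟨x, rfl⟩ := hw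
    exact ⟨T1.lab x, phi_lab T1 T2 x⟩
  · obtain ⟨x, y, z, hd, hm2⟩ := rep_internal hw
    set v := medB T1 (T1.lab x) (T1.lab y) (T1.lab z) with hv
    have hm1 : IsMedT T1 v x y z := medB_spec T1 _ _ _
    have hvint : v ∉ Set.range T1.lab := medT_not_lab hd hm1
    have h2 : IsMedT T2 (phi T1 T2 v) x y z := phi_med hQ hvint hd hm1
    exact ⟨v, medV_uniq T2.isTree h2 hm2⟩

end Transfer
end Bnm
namespace Bnm
set_option linter.unusedSectionVars false
set_option linter.unusedVariables false
set_option maxHeartbeats 4000000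

variable {X : Type}

theorem btw_taxa_ne {T : UBTree X} {v : Fin T.n} (hv : v ∉ Set.range T.lab) {p q : X}
    (h : Btw T.G (T.lab p) v (T.lab q)) : p ≠ q := by
  intro heq
  subst heq
  exact hv ⟨p, (btw_self_eq T.isTree h).symm⟩

theorem two_other_nbrs (T : UBTree X) {u v : Fin T.n} (h3 : vdeg T.G u = 3)
    (hv : T.G.Adj u v) :
    ∃ n1 n2, T.G.Adj u n1 ∧ T.G.Adj u n2 ∧ n1 ≠ n2 ∧ n1 ≠ v ∧ n2 ≠ v := by
  unfold vdeg at h3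
  obtain ⟨a, b, c, hab, hac, hbc, hset⟩ := Set.ncard_eq_three.mp h3
  have hA : ∀ w, w ∈ ({a, b, c} : Set (Fin T.n)) → T.G.Adj u w := by
    intro w hw
    have : w ∈ T.G.neighborSet u := hset ▸ hw
    exact this
  have hmem : v ∈ ({a, b, c} : Set (Fin T.n)) := hset ▸ (hv : v ∈ T.G.neighborSet u)
  have haA : T.G.Adj u a := hA a (by simp)
  have hbA : T.G.Adj u b := hA b (by simp)
  have hcA : T.G.Adj u c := hA c (by simp)
  simp only [Set.mem_insert_iff, Set.mem_singleton_iff] at hmem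
  rcases hmem with h | h | h
  · exact ⟨b, c, hbA, hcA, hbc, fun hh => hab (h ▸ hh ▸ rfl),
      fun hh => hac (h ▸ hh ▸ rfl)⟩
  · exact ⟨a, c, haA, hcA, hac, fun hh => hab (h ▸ hh ▸ rfl),
      fun hh => hbc (h ▸ hh ▸ rfl)⟩
  · exact ⟨a, b, haA, hbA, hab, fun hh => hac (h ▸ hh ▸ rfl),
      fun hh => hbc (h ▸ hh ▸ rfl)⟩

section Transfer

variable {T1 T2 : UBTree X}
  (hQ : ∀ a b c d, allDiff4 a b c d → (T1.Quartet a b c d ↔ T2.Quartet a b c d))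

include hQ

/-- Case A: two adjacent leaves. -/
theorem adjA {x y : X} (hadj : T1.G.Adj (T1.lab x) (T1.lab y)) :
    T2.G.Adj (T2.lab x) (T2.lab y) := by
  have hxy : x ≠ y := fun hh => T1.G.loopless.irrefl _ (hh ▸ hadj)
  have hall : ∀ w : X, w = x ∨ w = y := by
    intro w
    by_contra hcon
    push_neg at hcon
    obtain ⟨hwx, hwy⟩ := hcon
    have h1 := leaf_nbr T1.isTree (lab_leaf T1 x) hadj (T1.lab w)
      (fun hh => hwx (T1.lab_inj hh))
    have h2 := leaf_nbr T1.isTree (lab_leaf T1 y) hadj.symm (T1.lab w)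
      (fun hh => hwy (T1.lab_inj hh))
    have hne : T1.lab x ≠ T1.lab y := fun hh => hxy (T1.lab_inj hh)
    unfold Btw at h1 h2
    have := dc T1.G (T1.lab x) (T1.lab y); have := dc T1.G (T1.lab y) (T1.lab x)
    have := dc T1.G (T1.lab w) (T1.lab x); have := dc T1.G (T1.lab w) (T1.lab y)
    have h0 : T1.G.dist (T1.lab x) (T1.lab y) = 0 := by omega
    exact hne ((dist0 T1.isTree).mp h0)
  have hne2 : T2.lab y ≠ T2.lab x := fun hh => hxy (T2.lab_inj hh).symm
  rw [← SimpleGraph.dist_eq_one_iff_adj]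
  have hd0 : T2.G.dist (T2.lab x) (T2.lab y) ≠ 0 :=
    fun hh => hne2 ((dist0 T2.isTree).mp hh).symm
  by_contra hd1
  obtain ⟨s, hsa, hsb⟩ := flank T2.isTree hne2
  -- hsb : Btw (lab y) s (lab x)
  have hds : T2.G.dist (T2.lab y) s = 1 := adj_dist_one hsa
  by_cases hsr : s ∈ Set.range T2.lab
  · obtain ⟨w, hw⟩ := hsr
    rcases hall w with rfl | rfl
    · -- s = lab x : then dist = 1
      apply hd1
      rw [← hw] at hsb
      unfold Btw at hsb
      have h0 : T2.G.dist (T2.lab w) (T2.lab w) = 0 := (dist0 T2.isTree).mpr rfl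
      have := dc T2.G (T2.lab y) (T2.lab w); have := dc T2.G (T2.lab w) (T2.lab y)
      rw [← hw] at hds
      omega
    · -- s = lab y : contradiction with adjacency (loopless)
      rw [← hw] at hsa
      exact T2.G.loopless.irrefl _ hsa
  · obtain ⟨p, q, r, hd3, _⟩ := rep_internal hsr
    rcases hall p with rfl | rfl <;> rcases hall q with rfl | rfl <;>
      rcases hall r with rfl | rfl <;>
      first
        | exact hd3.1 rfl
        | exact hd3.2.1 rfl
        | exact hd3.2.2 rfl

/-- Case B: a leaf adjacent to an internal vertex. -/
theorem adjB {x : X} {v : Fin T1.n} (hv : v ∉ Set.range T1.lab)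
    (hadj : T1.G.Adj (T1.lab x) v) :
    T2.G.Adj (T2.lab x) (phi T1 T2 v) := by
  have hbtw_all : ∀ w : X, w ≠ x → Btw T1.G (T1.lab w) v (T1.lab x) := by
    intro w hw
    exact leaf_nbr T1.isTree (lab_leaf T1 x) hadj (T1.lab w)
      (fun hh => hw (T1.lab_inj hh))
  -- find a median representation of v with x as first coordinate
  have hrep : ∃ b c : X, allDiff3 x b c ∧ IsMedT T1 v x b c := by
    obtain ⟨p, q, r, hd, hm⟩ := rep_internal hv
    by_cases hxp : x = p
    · exact ⟨q, r, hxp ▸ hd, hxp ▸ hm⟩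
    · by_cases hxq : x = q
      · exact ⟨p, r, hxq ▸ ad12 hd, hxq ▸ medT_perm12 hm⟩
      · by_cases hxr : x = r
        · exact ⟨q, p, hxr ▸ ad13 hd, hxr ▸ medT_perm13 hm⟩
        · refine ⟨q, r, ⟨fun hh => hxq hh, fun hh => hxr hh, hd.2.2⟩,
            btw_comm (hbtw_all q (fun hh => hxq hh.symm)),
            btw_comm (hbtw_all r (fun hh => hxr hh.symm)), hm.2.2⟩
  obtain ⟨b, c, hd3, hmx⟩ := hrep
  have hT2cond : ∀ w : X, w ≠ x → ¬ T2.Quartet w x b c := by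
    intro w hwx q2
    obtain ⟨hwb, hwc, _, _⟩ := quartet_ends q2
    have had4 : allDiff4 w x b c := ⟨hwx, hwb, hwc, hd3.1, hd3.2.1, hd3.2.2⟩
    exact quartet_pointwise ((hQ w x b c had4).mpr q2) (hbtw_all w hwx) hmx.2.2
  set m2 := phi T1 T2 v with hm2def
  have M2 : IsMedT T2 m2 x b c := phi_med hQ hv hd3 hmx
  have hm2int : m2 ∉ Set.range T2.lab := medT_not_lab hd3 M2
  have hne : m2 ≠ T2.lab x := fun hh => hm2int ⟨x, hh.symm⟩
  rw [← SimpleGraph.dist_eq_one_iff_adj]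
  have hd0 : T2.G.dist (T2.lab x) m2 ≠ 0 := fun hh => hne ((dist0 T2.isTree).mp hh).symm
  by_contra hd1
  rw [dc T2.G (T2.lab x) m2] at hd0 hd1
  obtain ⟨s, hsa, hsb⟩ := flank T2.isTree hne
  -- hsb : Btw m2 s (lab x)
  have hds : T2.G.dist m2 s = 1 := adj_dist_one hsa
  have hsu : Btw T2.G (T2.lab x) s m2 := btw_comm hsb
  have hsnex : s ≠ T2.lab x := by
    intro hh
    rw [hh] at hds
    have := dc T2.G m2 (T2.lab x)
    exact hd1 (by omega)
  have hsnem : s ≠ m2 := fun hh => T2.G.loopless.irrefl _ (hh ▸ hsa)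
  have hsint : s ∉ Set.range T2.lab := by
    rintro ⟨w, rfl⟩
    exact leaf_not_interior T2.isTree (lab_leaf T2 w) hsu hsnex hsnem
  have hsc : Btw T2.G (T2.lab x) s (T2.lab b) := btw_sub T2.isTree hsu M2.1
  obtain ⟨w, hwx, hwb, S⟩ := rep_third hsint hsc
  have hwc : w ≠ c := by
    intro hh
    subst hh
    exact hsnem (medV_uniq T2.isTree S M2)
  refine hT2cond w hwx (quartet_of (fun t ht1 ht2 => ?_))
  -- ht1 : Btw (lab w) t (lab x), ht2 : Btw (lab b) t (lab c)
  have e1 : Btw T2.G t m2 (T2.lab x) := tproj T2.isTree (medT_rot M2) ht2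
  have e2 : Btw T2.G t s (T2.lab b) := tproj T2.isTree (medT_rot (medT_rot S)) ht1
  have e3 := hsu
  have e4 := hsc
  have e5 := M2.1
  unfold Btw at e1 e2 e3 e4 e5
  have t1 := tri T2.isTree t s (T2.lab x)
  have t2 := tri T2.isTree t m2 (T2.lab b)
  have := dc T2.G t s; have := dc T2.G s (T2.lab x); have := dc T2.G (T2.lab x) s
  have := dc T2.G t m2; have := dc T2.G m2 (T2.lab x); have := dc T2.G (T2.lab x) m2
  have := dc T2.G s m2; have := dc T2.G m2 s
  have := dc T2.G m2 (T2.lab b); have := dc T2.G s (T2.lab b)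
  omega

end Transfer
end Bnm
namespace Bnm
set_option linter.unusedSectionVars false
set_option linter.unusedVariables false
set_option maxHeartbeats 4000000

variable {X : Type}

section Transfer

variable {T1 T2 : UBTree X}
  (hQ : ∀ a b c d, allDiff4 a b c d → (T1.Quartet a b c d ↔ T2.Quartet a b c d))

include hQ

/-- Case C: two adjacent internal vertices. -/
theorem adjC {u v : Fin T1.n} (hu : u ∉ Set.range T1.lab) (hv : v ∉ Set.range T1.lab)
    (hadj : T1.G.Adj u v) : T2.G.Adj (phi T1 T2 u) (phi T1 T2 v) := by
  have duv : T1.G.dist u v = 1 := adj_dist_one hadj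
  have dvu : T1.G.dist v u = 1 := adj_dist_one hadj.symm
  obtain ⟨n1, n2, hn1, hn2, hn12, hn1v, hn2v⟩ :=
    two_other_nbrs T1 (T1.internal_deg u hu) hadj
  obtain ⟨m1, m2, hm1, hm2, hm12, hm1u, hm2u⟩ :=
    two_other_nbrs T1 (T1.internal_deg v hv) hadj.symm
  obtain ⟨la, hla_leaf, hba⟩ := ext_leaf T1.isTree hn1 (ub_dich T1)
  obtain ⟨lb, hlb_leaf, hbb⟩ := ext_leaf T1.isTree hn2 (ub_dich T1)
  obtain ⟨lc, hlc_leaf, hbc⟩ := ext_leaf T1.isTree hm1 (ub_dich T1)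
  obtain ⟨ld, hld_leaf, hbd⟩ := ext_leaf T1.isTree hm2 (ub_dich T1)
  obtain ⟨a, ha⟩ := (T1.leaf_iff la).mpr hla_leaf
  obtain ⟨b, hb⟩ := (T1.leaf_iff lb).mpr hlb_leaf
  obtain ⟨c, hc⟩ := (T1.leaf_iff lc).mpr hlc_leaf
  obtain ⟨d, hd⟩ := (T1.leaf_iff ld).mpr hld_leaf
  subst ha; subst hb; subst hc; subst hd
  have dn1 : T1.G.dist n1 u = 1 := adj_dist_one hn1.symm
  have dn2 : T1.G.dist n2 u = 1 := adj_dist_one hn2.symm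
  have dm1 : T1.G.dist m1 v = 1 := adj_dist_one hm1.symm
  have dm2 : T1.G.dist m2 v = 1 := adj_dist_one hm2.symm
  -- basic betweenness facts in T1
  have Bauv : Btw T1.G (T1.lab a) u v :=
    mednbr T1.isTree hba (btw_left T1.G v u) hn1v dn1 dvu
  have Bbuv : Btw T1.G (T1.lab b) u v :=
    mednbr T1.isTree hbb (btw_left T1.G v u) hn2v dn2 dvu
  have Bcvu : Btw T1.G (T1.lab c) v u :=
    mednbr T1.isTree hbc (btw_left T1.G u v) hm1u dm1 duv
  have Bdvu : Btw T1.G (T1.lab d) v u :=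
    mednbr T1.isTree hbd (btw_left T1.G u v) hm2u dm2 duv
  have Bab : Btw T1.G (T1.lab a) u (T1.lab b) := mednbr T1.isTree hba hbb hn12 dn1 dn2
  have Bcd : Btw T1.G (T1.lab c) v (T1.lab d) := mednbr T1.isTree hbc hbd hm12 dm1 dm2
  have Bac : Btw T1.G (T1.lab a) u (T1.lab c) :=
    mednbr T1.isTree hba Bcvu hn1v dn1 dvu
  have Bbc : Btw T1.G (T1.lab b) u (T1.lab c) :=
    mednbr T1.isTree hbb Bcvu hn2v dn2 dvu
  have Bca : Btw T1.G (T1.lab c) v (T1.lab a) :=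
    mednbr T1.isTree hbc Bauv hm1u dm1 duv
  have Bda : Btw T1.G (T1.lab d) v (T1.lab a) :=
    mednbr T1.isTree hbd Bauv hm2u dm2 duv
  have Mu : IsMedT T1 u a b c := ⟨Bab, Bac, Bbc⟩
  have Mv : IsMedT T1 v c d a := ⟨Bcd, Bca, Bda⟩
  have hdabc : allDiff3 a b c :=
    ⟨btw_taxa_ne hu Bab, btw_taxa_ne hu Bac, btw_taxa_ne hu Bbc⟩
  have hdcda : allDiff3 c d a :=
    ⟨btw_taxa_ne hv Bcd, btw_taxa_ne hv Bca, btw_taxa_ne hv Bda⟩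
  -- the quartet ab|cd holds in T1
  have Q1 : T1.Quartet a b c d := by
    refine quartet_of (fun t ht1 ht2 => ?_)
    have A3 : Btw T1.G t u (T1.lab c) := tproj T1.isTree Mu ht1
    have A4 : Btw T1.G t v (T1.lab a) := tproj T1.isTree Mv ht2
    have A1 := Bauv
    have A2 := Bcvu
    unfold Btw at A1 A2 A3 A4
    have t1 := tri T1.isTree t v (T1.lab c)
    have t2 := tri T1.isTree t u (T1.lab a)
    have := dc T1.G t v; have := dc T1.G v (T1.lab c); have := dc T1.G (T1.lab c) v
    have := dc T1.G t u; have := dc T1.G u (T1.lab a); have := dc T1.G (T1.lab a) u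
    have := dc T1.G u v; have := dc T1.G v u
    have := dc T1.G u (T1.lab c); have := dc T1.G v (T1.lab a)
    omega
  have had4 : allDiff4 a b c d := by
    obtain ⟨hac', had', hbc', hbd'⟩ := quartet_ends Q1
    exact ⟨hdabc.1, hac', had', hbc', hbd', hdcda.1⟩
  have Q2 : T2.Quartet a b c d := (hQ a b c d had4).mp Q1
  -- the four-branch condition in T1
  have cond1 : ∀ w : X, ¬ Btw T1.G (T1.lab w) u (T1.lab a) ∨
      ¬ Btw T1.G (T1.lab w) u (T1.lab b) ∨ ¬ Btw T1.G (T1.lab w) v (T1.lab c) ∨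
      ¬ Btw T1.G (T1.lab w) v (T1.lab d) := by
    intro w
    by_contra hcon
    push_neg at hcon
    obtain ⟨c1, c2, c3, c4⟩ := hcon
    have hc' : ¬ Btw T1.G (T1.lab w) u (T1.lab c) := by
      rcases l2t hdabc Mu w with h | h | h
      · exact absurd c1 h
      · exact absurd c2 h
      · exact h
    have hA' : ¬ Btw T1.G (T1.lab w) v (T1.lab a) := by
      rcases l2t hdcda Mv w with h | h | h
      · exact absurd c3 h
      · exact absurd c4 h
      · exact h
    obtain ⟨m, hm1', hm2', hm3'⟩ := exists_medB T1.isTree (T1.lab w) u v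
    rcases btw_pair T1.isTree duv hm3' with hmu | hmv
    · -- m = u : Btw w u v, derive Btw w u c
      rw [hmu] at hm1' hm2'
      apply hc'
      unfold Btw at *
      have := dc T1.G u v; have := dc T1.G v u
      have := dc T1.G v (T1.lab c); have := dc T1.G (T1.lab c) v
      have := dc T1.G u (T1.lab c)
      omega
    · -- m = v : Btw w v u, derive Btw w v a
      rw [hmv] at hm1' hm2'
      apply hA'
      unfold Btw at *
      have := dc T1.G u v; have := dc T1.G v u
      have := dc T1.G u (T1.lab a); have := dc T1.G (T1.lab a) u
      have := dc T1.G v (T1.lab a)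
      omega
  -- transfer to T2
  set u2 := phi T1 T2 u with hu2def
  set v2 := phi T1 T2 v with hv2def
  have M2u : IsMedT T2 u2 a b c := phi_med hQ hu hdabc Mu
  have M2v : IsMedT T2 v2 c d a := phi_med hQ hv hdcda Mv
  have cond2 : ∀ w : X,
      (w = a ∨ ¬ Btw T2.G (T2.lab w) u2 (T2.lab a)) ∨
      (w = b ∨ ¬ Btw T2.G (T2.lab w) u2 (T2.lab b)) ∨
      (w = c ∨ ¬ Btw T2.G (T2.lab w) v2 (T2.lab c)) ∨
      (w = d ∨ ¬ Btw T2.G (T2.lab w) v2 (T2.lab d)) := by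
    intro w
    rcases cond1 w with h | h | h | h
    · exact Or.inl (sb_transfer hQ hdabc Mu M2u.2.2 h)
    · exact Or.inr (Or.inl (sb_transfer hQ (ad12 hdabc) (medT_perm12 Mu) M2u.2.1 h))
    · exact Or.inr (Or.inr (Or.inl (sb_transfer hQ hdcda Mv M2v.2.2 h)))
    · exact Or.inr (Or.inr (Or.inr
        (sb_transfer hQ (ad12 hdcda) (medT_perm12 Mv) M2v.2.1 h)))
  -- geometry in T2
  have hne_uv2 : u2 ≠ v2 := by
    intro hh
    exact quartet_pointwise Q2 M2u.1 (by rw [hh]; exact M2v.1)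
  have Bav2c : Btw T2.G (T2.lab a) v2 (T2.lab c) := btw_comm M2v.2.1
  have Bau2c : Btw T2.G (T2.lab a) u2 (T2.lab c) := M2u.2.1
  have Bauv2 : Btw T2.G (T2.lab a) u2 v2 := by
    rcases btw_cases T2.isTree Bau2c Bav2c with h | h
    · exact absurd (quartet_pointwise Q2 (btw_sub T2.isTree h M2u.1) M2v.1) not_false
    · exact btw_mid2 T2.isTree Bau2c h
  rw [← SimpleGraph.dist_eq_one_iff_adj]
  have hd0 : T2.G.dist u2 v2 ≠ 0 := fun hh => hne_uv2 ((dist0 T2.isTree).mp hh)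
  by_contra hd1
  obtain ⟨s, hsa, hsb⟩ := flank T2.isTree (Ne.symm hne_uv2)
  -- hsb : Btw v2 s u2
  have hds : T2.G.dist v2 s = 1 := adj_dist_one hsa
  have Bu2sv2 : Btw T2.G u2 s v2 := btw_comm hsb
  have hsnu2 : s ≠ u2 := by
    intro hh
    rw [hh] at hds
    have := dc T2.G v2 u2; have := dc T2.G u2 v2
    exact hd1 (by omega)
  have hsnv2 : s ≠ v2 := fun hh => T2.G.loopless.irrefl _ (hh ▸ hsa)
  have hsint : s ∉ Set.range T2.lab := by
    rintro ⟨w, rfl⟩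
    exact leaf_not_interior T2.isTree (lab_leaf T2 w) Bu2sv2 hsnu2 hsnv2
  have Basv2 : Btw T2.G (T2.lab a) s v2 := btw_sub2 T2.isTree Bauv2 Bu2sv2
  have Bau2s : Btw T2.G (T2.lab a) u2 s := btw_mid2 T2.isTree Bauv2 Bu2sv2
  have Basc : Btw T2.G (T2.lab a) s (T2.lab c) := btw_sub T2.isTree Basv2 Bav2c
  obtain ⟨w, hwa, hwc, S⟩ := rep_third hsint Basc
  have hwb : w ≠ b := by
    intro hh
    subst hh
    exact hsnu2 (medV_uniq T2.isTree S (medT_perm23 M2u))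
  have hwd : w ≠ d := by
    intro hh
    subst hh
    exact hsnv2 (medV_uniq T2.isTree S (medT_rot (medT_rot M2v)))
  -- now refute cond2 at w
  have Basw : Btw T2.G (T2.lab a) s (T2.lab w) := S.2.1
  have Bu2sw : Btw T2.G u2 s (T2.lab w) := btw_mid T2.isTree Bau2s Basw
  have Bwsu2 : Btw T2.G (T2.lab w) s u2 := btw_comm Bu2sw
  have Bsu2a : Btw T2.G s u2 (T2.lab a) := btw_comm Bau2s
  have Bwu2a : Btw T2.G (T2.lab w) u2 (T2.lab a) :=
    btw_concat T2.isTree hsnu2 Bwsu2 Bsu2a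
  have Bsu2b : Btw T2.G s u2 (T2.lab b) := tproj T2.isTree (medT_perm23 M2u) Basc
  have Bwu2b : Btw T2.G (T2.lab w) u2 (T2.lab b) :=
    btw_concat T2.isTree hsnu2 Bwsu2 Bsu2b
  have Bwsc : Btw T2.G (T2.lab w) s (T2.lab c) := btw_comm S.2.2
  have Bsv2c : Btw T2.G s v2 (T2.lab c) := btw_mid T2.isTree Basv2 Bav2c
  have Bwsv2 : Btw T2.G (T2.lab w) s v2 := btw_mid2 T2.isTree Bwsc Bsv2c
  have Bwv2c : Btw T2.G (T2.lab w) v2 (T2.lab c) :=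
    btw_concat T2.isTree hsnv2 Bwsv2 Bsv2c
  have Bsv2d : Btw T2.G s v2 (T2.lab d) :=
    tproj T2.isTree (medT_perm23 M2v) (btw_comm Basc)
  have Bwv2d : Btw T2.G (T2.lab w) v2 (T2.lab d) :=
    btw_concat T2.isTree hsnv2 Bwsv2 Bsv2d
  rcases cond2 w with (h | h) | (h | h) | (h | h) | (h | h)
  · exact hwa h
  · exact h Bwu2a
  · exact hwb h
  · exact h Bwu2b
  · exact hwc h
  · exact h Bwv2c
  · exact hwd h
  · exact h Bwv2d

end Transfer
end Bnm
namespace Bnm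
set_option linter.unusedSectionVars false
set_option linter.unusedVariables false
set_option maxHeartbeats 4000000

variable {X : Type}

section Transfer

variable {T1 T2 : UBTree X}
  (hQ : ∀ a b c d, allDiff4 a b c d → (T1.Quartet a b c d ↔ T2.Quartet a b c d))

include hQ

theorem adj_transfer : ∀ u v : Fin T1.n, T1.G.Adj u v →
    T2.G.Adj (phi T1 T2 u) (phi T1 T2 v) := by
  intro u v hadj
  by_cases hu : u ∈ Set.range T1.lab
  · obtain ⟨x, rfl⟩ := hu
    by_cases hv : v ∈ Set.range T1.lab
    · obtain ⟨y, rfl⟩ := hv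
      rw [phi_lab, phi_lab]
      exact adjA hQ hadj
    · rw [phi_lab]
      exact adjB hQ hv hadj
  · by_cases hv : v ∈ Set.range T1.lab
    · obtain ⟨y, rfl⟩ := hv
      rw [phi_lab]
      exact (adjB hQ hu hadj.symm).symm
    · exact adjC hQ hu hv hadj

theorem adj_reflect {u v : Fin T1.n}
    (h2 : T2.G.Adj (phi T1 T2 u) (phi T1 T2 v)) : T1.G.Adj u v := by
  classical
  haveI hF1 : Fintype T1.G.edgeSet := (Set.toFinite _).fintype
  haveI hF2 : Fintype T2.G.edgeSet := (Set.toFinite _).fintype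
  have hbij : Function.Bijective (phi T1 T2) := ⟨phi_injective hQ, phi_surjective hQ⟩
  have hcardV : Fintype.card (Fin T1.n) = Fintype.card (Fin T2.n) :=
    Fintype.card_of_bijective hbij
  have hc1 := T1.isTree.card_edgeFinset
  have hc2 := T2.isTree.card_edgeFinset
  set f : Sym2 (Fin T1.n) → Sym2 (Fin T2.n) := Sym2.map (phi T1 T2) with hf
  have hinj : Function.Injective f := Sym2.map.injective hbij.1
  have hmapsub : T1.G.edgeFinset.image f ⊆ T2.G.edgeFinset := by
    intro e he
    rw [Finset.mem_image] at he
    obtain ⟨e1, he1, rfl⟩ := he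
    obtain ⟨⟨p, q⟩, rfl⟩ := e1.exists_rep
    rw [SimpleGraph.mem_edgeFinset, SimpleGraph.mem_edgeSet] at he1
    rw [SimpleGraph.mem_edgeFinset]
    have : f s(p, q) = s(phi T1 T2 p, phi T1 T2 q) := by
      simp [hf, Sym2.map_pair_eq]
    rw [this, SimpleGraph.mem_edgeSet]
    exact adj_transfer hQ p q he1
  have hcard : (T1.G.edgeFinset.image f).card = T2.G.edgeFinset.card := by
    rw [Finset.card_image_of_injective _ hinj]
    omega
  have heq : T1.G.edgeFinset.image f = T2.G.edgeFinset :=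
    Finset.eq_of_subset_of_card_le hmapsub (le_of_eq hcard.symm)
  have hmem : s(phi T1 T2 u, phi T1 T2 v) ∈ T2.G.edgeFinset := by
    rw [SimpleGraph.mem_edgeFinset, SimpleGraph.mem_edgeSet]
    exact h2
  rw [← heq, Finset.mem_image] at hmem
  obtain ⟨e1, he1, hfe⟩ := hmem
  obtain ⟨⟨p, q⟩, rfl⟩ := e1.exists_rep
  rw [SimpleGraph.mem_edgeFinset, SimpleGraph.mem_edgeSet] at he1
  have hfe' : s(phi T1 T2 p, phi T1 T2 q) = s(phi T1 T2 u, phi T1 T2 v) := by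
    rw [← hfe]; simp [hf, Sym2.map_pair_eq]
  rw [Sym2.eq_iff] at hfe'
  rcases hfe' with ⟨h1', h2'⟩ | ⟨h1', h2'⟩
  · rw [hbij.1 h1', hbij.1 h2'] at he1
    exact he1
  · rw [hbij.1 h1', hbij.1 h2'] at he1
    exact he1.symm

theorem backward_iso : ∃ φ : T1.G ≃g T2.G, ∀ x : X, φ (T1.lab x) = T2.lab x := by
  have hbij : Function.Bijective (phi T1 T2) := ⟨phi_injective hQ, phi_surjective hQ⟩
  refine ⟨⟨Equiv.ofBijective _ hbij, ?_⟩, fun x => phi_lab T1 T2 x⟩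
  intro u v
  exact ⟨adj_reflect hQ, adj_transfer hQ u v⟩

end Transfer

theorem pathSet_map_mem {V W : Type} {G : SimpleGraph V} {H : SimpleGraph W}
    (ψ : G ≃g H) {u v t : V} (h : t ∈ PathSet G u v) :
    ψ t ∈ PathSet H (ψ u) (ψ v) := by
  obtain ⟨p, hp, ht⟩ := h
  refine ⟨p.map ψ.toHom, ?_, ?_⟩
  · exact SimpleGraph.Walk.map_isPath_of_injective (fun a b hab => ψ.injective hab) hp
  · rw [SimpleGraph.Walk.support_map]
    exact List.mem_map_of_mem ht

theorem pathSet_map {V W : Type} {G : SimpleGraph V} {H : SimpleGraph W}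
    (ψ : G ≃g H) (u v : V) :
    PathSet H (ψ u) (ψ v) = ψ '' PathSet G u v := by
  ext t
  constructor
  · intro h
    have h2 := pathSet_map_mem ψ.symm h
    rw [RelIso.symm_apply_apply, RelIso.symm_apply_apply] at h2
    exact ⟨ψ.symm t, h2, RelIso.apply_symm_apply ψ t⟩
  · rintro ⟨s, hs, rfl⟩
    exact pathSet_map_mem ψ hs

theorem forward {T1 T2 : UBTree X}
    (h : ∃ φ : T1.G ≃g T2.G, ∀ x : X, φ (T1.lab x) = T2.lab x) :
    ∀ a b c d : X, allDiff4 a b c d → (T1.Quartet a b c d ↔ T2.Quartet a b c d) := by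
  obtain ⟨φ, hφ⟩ := h
  intro a b c d _
  have key : T2.Quartet a b c d ↔ T1.Quartet a b c d := by
    unfold UBTree.Quartet
    rw [← hφ a, ← hφ b, ← hφ c, ← hφ d, pathSet_map, pathSet_map]
    exact Set.disjoint_image_iff φ.injective
  exact key.symm

end Bnm

theorem iso_iff_same_quartets' {X : Type} (T1 T2 : UBTree X) :
    (∃ φ : T1.G ≃g T2.G, ∀ x : X, φ (T1.lab x) = T2.lab x) ↔
      ∀ a b c d : X, allDiff4 a b c d →
        (T1.Quartet a b c d ↔ T2.Quartet a b c d) :=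
  ⟨Bnm.forward, fun hQ => Bnm.backward_iso hQ⟩


/-- Buneman: two unrooted binary phylogenetic trees on the same
taxon set are topologically identical (label-preservingly isomorphic) if and only
if they induce identical sets of quartets, i.e. for all four distinct taxa
`a, b, c, d`, `T1` displays the quartet `ab|cd` iff `T2` does (ranging over all
orderings, this says the restrictions of `T1` and `T2` to every 4-element subset
coincide). -/
theorem iso_iff_same_quartets {X : Type} (T1 T2 : UBTree X) :
    UBTree.Iso T1 T2 ↔
      ∀ a b c d : X, allDiff4 a b c d →
        (T1.Quartet a b c d ↔ T2.Quartet a b c d) := by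
  constructor
  · intro h
    exact Bnm.forward h
  · intro hQ
    exact Bnm.backward_iso hQ
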